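/- Let C ⊆ {0,1}^n be a concept class with |C| = m ≥ 2 and let 0 ≤ ε < 1/2. Suppose there exist a unit vector ψ ∈ ℂ^{n+1} and a family of positive semidefinite matrices (M_x)_{x ∈ C} on ℂ^{n+1} with Σ_{x∈C} M_x ≤ I, such that ⟨ψ| O_x M_x O_x |ψ⟩ ≥ 1−ε for every x ∈ C. Then there exists a set S ⊆ [n] with |S| ≤ 4·log₂(m) / (1 − 2√(ε(1−ε))) such that every pair of distinct concepts in C differs on at least one index in S. -/

import Mathlib

open Matrix
open scoped ComplexOrder

/-- Extend an `n`-bit string `x` to indices `0,…,n` with `x₀ := 0` (false). -/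
noncomputable def extendBit {n : ℕ} (x : Fin n → Bool) : Fin (n + 1) → Bool :=
  Fin.cases false x

/-- The phase oracle `O_x` on `ℂ^{n+1}`: the diagonal matrix acting as
`O_x|i⟩ = (−1)^{x_i}|i⟩` for `1 ≤ i ≤ n` and `O_x|0⟩ = |0⟩`. -/
noncomputable def oracle1 (n : ℕ) (x : Fin n → Bool) :
    Matrix (Fin (n + 1)) (Fin (n + 1)) ℂ :=
  Matrix.diagonal fun i => if extendBit x i then (-1 : ℂ) else 1


lemma amgm (x y : ℝ) (hx : 0 ≤ x) (hy : 0 ≤ y) :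
    Real.sqrt (x * y) ≤ (x + y) / 2 := by
  rw [show (x+y)/2 = Real.sqrt (((x+y)/2)^2) by rw [Real.sqrt_sq (by linarith)]]
  apply Real.sqrt_le_sqrt; nlinarith [sq_nonneg (x - y)]

lemma key_real (ε a b : ℝ) (hε0 : 0 ≤ ε) (hε1 : ε ≤ 1/2)
    (ha : 1 - ε ≤ a) (ha1 : a ≤ 1) (hb0 : 0 ≤ b) (hb : b ≤ ε) :
    Real.sqrt (a * b) + Real.sqrt ((1 - a) * (1 - b)) ≤ 2 * Real.sqrt (ε * (1 - ε)) := by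
  rcases eq_or_lt_of_le hε0 with h0 | h0
  · have hb' : b = 0 := le_antisymm (hb.trans h0.symm.le) hb0
    have ha' : a = 1 := le_antisymm ha1 (by linarith)
    simp [hb', ha']
  · set t := Real.sqrt ε with ht
    set u := Real.sqrt (1 - ε) with hu
    have ht0 : 0 < t := Real.sqrt_pos.2 h0
    have hu0 : 0 < u := Real.sqrt_pos.2 (by linarith)
    have ht2 : t ^ 2 = ε := by rw [ht, Real.sq_sqrt hε0]
    have hu2 : u ^ 2 = 1 - ε := by rw [hu, Real.sq_sqrt (by linarith)]
    have h1 : Real.sqrt (a * b) ≤ ((t/u) * a + (u/t) * b) / 2 := by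
      have := amgm ((t/u) * a) ((u/t) * b) (mul_nonneg (by positivity) (by linarith)) (mul_nonneg (by positivity) (by linarith))
      have heq : (t/u) * a * ((u/t) * b) = a * b := by field_simp
      rwa [heq] at this
    have h2 : Real.sqrt ((1-a) * (1-b)) ≤ ((u/t) * (1-a) + (t/u) * (1-b)) / 2 := by
      have := amgm ((u/t) * (1-a)) ((t/u) * (1-b)) (mul_nonneg (by positivity) (by linarith)) (mul_nonneg (by positivity) (by linarith))
      have heq : (u/t) * (1-a) * ((t/u) * (1-b)) = (1-a) * (1-b) := by field_simp
      rwa [heq] at this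
    have hrhs : 2 * Real.sqrt (ε * (1 - ε)) = 2 * (t * u) := by
      rw [ht, hu, Real.sqrt_mul hε0]
    rw [hrhs]
    have key : ((t/u) * a + (u/t) * b) / 2 + ((u/t) * (1-a) + (t/u) * (1-b)) / 2 ≤ 2 * (t * u) := by
      rw [← add_div, ← sub_nonneg]
      have expand : 2 * (t*u) - (((t/u) * a + (u/t) * b) + ((u/t) * (1-a) + (t/u) * (1-b))) / 2
          = ((4 * (t^2 * u^2) - (t^2 * (a + 1 - b) + u^2 * (1 - a + b)))) / (2 * t * u) := by
        field_simp; ring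
      rw [expand]
      apply div_nonneg _ (by positivity)
      have hs1 : 1 - a + b ≤ 2 * ε := by linarith
      have hs0 : 0 ≤ 1 - a + b := by linarith
      have hut : t^2 ≤ u^2 := by rw [ht2, hu2]; linarith
      nlinarith [sq_nonneg (t*u)]
    linarith

lemma cs_psd {k : ℕ} (A : Matrix (Fin k) (Fin k) ℂ) (hA : A.PosSemidef)
    (u v : Fin k → ℂ) :
    (star u ⬝ᵥ (A *ᵥ v)).re ≤
      Real.sqrt ((star u ⬝ᵥ (A *ᵥ u)).re * (star v ⬝ᵥ (A *ᵥ v)).re) := by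
  obtain ⟨B, rfl⟩ : ∃ B : Matrix (Fin k) (Fin k) ℂ, A = Bᴴ * B := by
    open scoped MatrixOrder in
    exact CStarAlgebra.nonneg_iff_eq_star_mul_self.mp hA.nonneg
  have key : ∀ a b : Fin k → ℂ,
      star a ⬝ᵥ ((Bᴴ * B) *ᵥ b) = star (B *ᵥ a) ⬝ᵥ (B *ᵥ b) := by
    intro a b
    rw [← Matrix.mulVec_mulVec, Matrix.dotProduct_mulVec, Matrix.star_mulVec]
  rw [key u v, key u u, key v v]
  set p : EuclideanSpace ℂ (Fin k) := (WithLp.equiv 2 _).symm (B *ᵥ u)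
  set q : EuclideanSpace ℂ (Fin k) := (WithLp.equiv 2 _).symm (B *ᵥ v)
  have hpq : star (B *ᵥ u) ⬝ᵥ (B *ᵥ v) = @inner ℂ _ _ p q :=
    by rw [dotProduct_comm]; rfl
  have hpp : star (B *ᵥ u) ⬝ᵥ (B *ᵥ u) = @inner ℂ _ _ p p :=
    by rw [dotProduct_comm]; rfl
  have hqq : star (B *ᵥ v) ⬝ᵥ (B *ᵥ v) = @inner ℂ _ _ q q :=
    by rw [dotProduct_comm]; rfl
  rw [hpq, hpp, hqq]
  calc (@inner ℂ _ _ p q).re ≤ ‖(@inner ℂ _ _ p q)‖ := Complex.re_le_norm _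
    _ ≤ ‖p‖ * ‖q‖ := norm_inner_le_norm p q
    _ = Real.sqrt ((@inner ℂ _ _ p p).re * (@inner ℂ _ _ q q).re) := by
        rw [@norm_eq_sqrt_re_inner ℂ, @norm_eq_sqrt_re_inner ℂ,
          ← Real.sqrt_mul inner_self_nonneg]
        rfl

lemma dot_self_re {k : ℕ} (u : Fin k → ℂ) : (star u ⬝ᵥ u).re = ∑ i, ‖u i‖ ^ 2 := by
  rw [dotProduct, Complex.re_sum]
  refine Finset.sum_congr rfl fun i _ => ?_
  simp [Pi.star_apply, Complex.mul_re, Complex.sq_norm, Complex.normSq_apply]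

lemma overlap_bound {k : ℕ} (ε : ℝ) (hε0 : 0 ≤ ε) (hε1 : ε ≤ 1/2)
    (u v : Fin k → ℂ) (hu : ∑ i, ‖u i‖ ^ 2 = 1) (hv : ∑ i, ‖v i‖ ^ 2 = 1)
    (A B : Matrix (Fin k) (Fin k) ℂ) (hA : A.PosSemidef) (hB : B.PosSemidef)
    (hAB : ((1 : Matrix (Fin k) (Fin k) ℂ) - (A + B)).PosSemidef)
    (hAu : (1 - ε : ℝ) ≤ (star u ⬝ᵥ (A *ᵥ u)).re)
    (hBv : (1 - ε : ℝ) ≤ (star v ⬝ᵥ (B *ᵥ v)).re) :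
    (star u ⬝ᵥ v).re ≤ 2 * Real.sqrt (ε * (1 - ε)) := by
  have hsubre : ∀ (X : Matrix (Fin k) (Fin k) ℂ) (a b : Fin k → ℂ),
      (star a ⬝ᵥ ((1 - X) *ᵥ b)).re = (star a ⬝ᵥ b).re - (star a ⬝ᵥ (X *ᵥ b)).re := by
    intro X a b
    rw [Matrix.sub_mulVec, dotProduct_sub, Complex.sub_re, Matrix.one_mulVec]
  have h1A : ((1 : Matrix (Fin k) (Fin k) ℂ) - A).PosSemidef := by
    have := hAB.add hB
    have he : (1 - (A + B)) + B = 1 - A := by abel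
    rwa [he] at this
  have huu : (star u ⬝ᵥ u).re = 1 := by rw [dot_self_re, hu]
  have hvv : (star v ⬝ᵥ v).re = 1 := by rw [dot_self_re, hv]
  set a : ℝ := (star u ⬝ᵥ (A *ᵥ u)).re with haa
  set b : ℝ := (star v ⬝ᵥ (A *ᵥ v)).re with hbb
  have ha1 : a ≤ 1 := by
    have h0 := h1A.re_dotProduct_nonneg u
    rw [show RCLike.re (star u ⬝ᵥ ((1 - A) *ᵥ u)) = (star u ⬝ᵥ ((1 - A) *ᵥ u)).re from rfl,
      hsubre, huu] at h0
    linarith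
  have hb0 : 0 ≤ b := hA.re_dotProduct_nonneg v
  have hbε : b ≤ ε := by
    have h0 := hAB.re_dotProduct_nonneg v
    rw [show RCLike.re (star v ⬝ᵥ ((1 - (A + B)) *ᵥ v)) = (star v ⬝ᵥ ((1 - (A + B)) *ᵥ v)).re
        from rfl, hsubre, hvv] at h0
    rw [Matrix.add_mulVec, dotProduct_add, Complex.add_re] at h0
    linarith
  have hsplit : (star u ⬝ᵥ v).re = (star u ⬝ᵥ (A *ᵥ v)).re + (star u ⬝ᵥ ((1 - A) *ᵥ v)).re := by
    rw [hsubre]; ring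
  have hcs1 : (star u ⬝ᵥ (A *ᵥ v)).re ≤ Real.sqrt (a * b) := cs_psd A hA u v
  have hcs2 : (star u ⬝ᵥ ((1 - A) *ᵥ v)).re ≤ Real.sqrt ((1 - a) * (1 - b)) := by
    have h3 := cs_psd (1 - A) h1A u v
    have e1 : (star u ⬝ᵥ ((1 - A) *ᵥ u)).re = 1 - a := by rw [hsubre, huu]
    have e2 : (star v ⬝ᵥ ((1 - A) *ᵥ v)).re = 1 - b := by rw [hsubre, hvv]
    rwa [e1, e2] at h3
  have hkey := key_real ε a b hε0 hε1 hAu ha1 hb0 hbε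
  rw [hsplit]
  linarith



def pairsCS {n : ℕ} (C : Finset (Fin n → Bool)) (S : Finset (Fin n)) :
    Finset ((Fin n → Bool) × (Fin n → Bool)) :=
  (C ×ˢ C).filter (fun p => p.1 ≠ p.2 ∧ ∀ j ∈ S, p.1 j = p.2 j)

lemma step_lemma {n : ℕ} (w : Fin n → ℝ) (hw0 : ∀ j, 0 ≤ w j) (hw1 : ∑ j, w j ≤ 1)
    (C : Finset (Fin n → Bool)) (c : ℝ)
    (hc : ∀ x ∈ C, ∀ y ∈ C, x ≠ y →
      c ≤ ∑ j ∈ Finset.univ.filter (fun j => x j ≠ y j), w j)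
    (S : Finset (Fin n)) (hP : (pairsCS C S).Nonempty) :
    ∃ j, ((pairsCS C (insert j S)).card : ℝ) ≤ (1 - c) * (pairsCS C S).card := by
  set P := pairsCS C S with hPdef
  set f : Fin n → ℕ := fun j => (P.filter (fun p => p.1 j ≠ p.2 j)).card with hf
  -- double counting
  have hdc : c * P.card ≤ ∑ j, w j * f j := by
    have h1 : ∀ j, w j * f j = ∑ p ∈ P, if p.1 j ≠ p.2 j then w j else 0 := by
      intro j
      rw [← Finset.sum_filter, Finset.sum_const, nsmul_eq_mul, mul_comm]
    have h2 : ∑ j, w j * f j = ∑ p ∈ P, ∑ j, if p.1 j ≠ p.2 j then w j else 0 := by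
      simp_rw [h1]; rw [Finset.sum_comm]
    rw [h2]
    have h3 : ∀ p ∈ P, c ≤ ∑ j, if p.1 j ≠ p.2 j then w j else 0 := by
      intro p hp
      simp only [hPdef, pairsCS, Finset.mem_filter, Finset.mem_product] at hp
      rw [← Finset.sum_filter]
      exact hc p.1 hp.1.1 p.2 hp.1.2 hp.2.1
    calc c * P.card = ∑ _p ∈ P, c := by rw [Finset.sum_const, nsmul_eq_mul, mul_comm]
      _ ≤ _ := Finset.sum_le_sum h3
  -- there is an index with many split pairs
  have hn : (Finset.univ : Finset (Fin n)).Nonempty := by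
    obtain ⟨p, hp⟩ := hP
    simp only [hPdef, pairsCS, Finset.mem_filter] at hp
    by_contra h
    rw [Finset.not_nonempty_iff_eq_empty] at h
    exact hp.2.1 (funext fun j => absurd (Finset.mem_univ j) (by simp [h]))
  obtain ⟨j, -, hj⟩ := Finset.exists_max_image Finset.univ f hn
  have hjmax : c * P.card ≤ f j := by
    have : ∑ i, w i * f i ≤ ∑ i, w i * f j :=
      Finset.sum_le_sum fun i _ => mul_le_mul_of_nonneg_left (by exact_mod_cast hj i (Finset.mem_univ i)) (hw0 i)
    have h4 : ∑ i, w i * f j = (∑ i, w i) * f j := by rw [Finset.sum_mul]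
    have h5 : (∑ i, w i) * f j ≤ 1 * f j :=
      mul_le_mul_of_nonneg_right hw1 (Nat.cast_nonneg _)
    calc c * P.card ≤ ∑ i, w i * f i := hdc
      _ ≤ (∑ i, w i) * f j := by rw [← h4]; exact this
      _ ≤ f j := by rw [one_mul] at h5; exact h5
  refine ⟨j, ?_⟩
  have hsub : pairsCS C (insert j S) = P.filter (fun p => ¬ p.1 j ≠ p.2 j) := by
    ext p
    simp only [pairsCS, Finset.mem_filter, Finset.mem_insert, hPdef, not_not]
    constructor
    · rintro ⟨hp, hne, hall⟩
      exact ⟨⟨hp, hne, fun i hi => hall i (Or.inr hi)⟩, hall j (Or.inl rfl)⟩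
    · rintro ⟨⟨hp, hne, hall⟩, hj'⟩
      exact ⟨hp, hne, fun i hi => hi.elim (fun h => h ▸ hj') (hall i)⟩
  have hcard : (P.filter (fun p => ¬ p.1 j ≠ p.2 j)).card + f j = P.card := by
    rw [hf, add_comm]
    exact Finset.card_filter_add_card_filter_not _
  rw [hsub]
  have : ((P.filter (fun p => ¬ p.1 j ≠ p.2 j)).card : ℝ) = (P.card : ℝ) - f j := by
    rw [← hcard]; push_cast; ring
  rw [this]
  linarith


lemma build_lemma {n : ℕ} (w : Fin n → ℝ) (hw0 : ∀ j, 0 ≤ w j) (hw1 : ∑ j, w j ≤ 1)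
    (C : Finset (Fin n → Bool)) (c : ℝ) (hc0 : 0 < c) (hc1 : c < 1)
    (hc : ∀ x ∈ C, ∀ y ∈ C, x ≠ y →
      c ≤ ∑ j ∈ Finset.univ.filter (fun j => x j ≠ y j), w j) :
    ∀ (N : ℕ) (S : Finset (Fin n)), (pairsCS C S).card = N →
    ∃ T : Finset (Fin n), S ⊆ T ∧ pairsCS C T = ∅ ∧
      (T.card : ℝ) ≤ S.card + (if N = 0 then 0 else 1 + Real.log N / c) := by
  intro N
  induction N using Nat.strong_induction_on with
  | _ N ih =>
    intro S hS
    rcases Nat.eq_zero_or_pos N with h0 | hpos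
    · subst h0
      exact ⟨S, le_refl _, Finset.card_eq_zero.mp hS, by simp⟩
    · have hne : (pairsCS C S).Nonempty := Finset.card_pos.mp (hS ▸ hpos)
      obtain ⟨j, hj⟩ := step_lemma w hw0 hw1 C c hc S hne
      rw [hS] at hj
      set N' := (pairsCS C (insert j S)).card with hN'
      have hlt : N' < N := by
        by_contra h
        push_neg at h
        have h1 : (N : ℝ) ≤ (1 - c) * N := le_trans (by exact_mod_cast h) hj
        have h2 : (0:ℝ) < N := by exact_mod_cast hpos
        nlinarith
      obtain ⟨T, hsub, hempty, hbound⟩ := ih N' hlt (insert j S) rfl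
      refine ⟨T, le_trans (Finset.subset_insert j S) hsub, hempty, ?_⟩
      have hN0 : (N : ℝ) ≥ 1 := by exact_mod_cast hpos
      rw [if_neg (Nat.pos_iff_ne_zero.mp hpos)]
      have hcardins : ((insert j S).card : ℝ) ≤ S.card + 1 := by
        exact_mod_cast Finset.card_insert_le j S
      rcases Nat.eq_zero_or_pos N' with h0' | hpos'
      · rw [h0', if_pos rfl] at hbound
        have : 0 ≤ Real.log N / c :=
          div_nonneg (Real.log_nonneg hN0) hc0.le
        linarith
      · rw [if_neg (Nat.pos_iff_ne_zero.mp hpos')] at hbound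
        have hN'1 : (1 : ℝ) ≤ N' := by exact_mod_cast hpos'
        have hlogN' : Real.log N' ≤ Real.log (1 - c) + Real.log N := by
          rw [← Real.log_mul (by linarith) (by linarith)]
          exact Real.log_le_log (by linarith) hj
        have hlog1c : Real.log (1 - c) ≤ -c := by
          have := Real.log_le_sub_one_of_pos (show (0:ℝ) < 1 - c by linarith)
          linarith
        have hdiv : Real.log N' / c ≤ Real.log N / c - 1 := by
          rw [div_le_iff₀ hc0, sub_mul, div_mul_cancel₀ _ hc0.ne', one_mul]
          linarith
        linarith

/-- Real part of each overlap term. -/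
lemma term_re (d1 d2 : Bool) (z : ℂ) :
    (star ((if d1 then (-1:ℂ) else 1) * z) * ((if d2 then (-1:ℂ) else 1) * z)).re
     = ‖z‖^2 - 2 * (if d1 ≠ d2 then ‖z‖^2 else 0) := by
  have hval : ((starRingEnd ℂ) z * z).re = ‖z‖ ^ 2 := by
    rw [mul_comm, Complex.mul_conj]
    norm_num [Complex.normSq_eq_norm_sq]
    rw [← Complex.ofReal_pow, Complex.ofReal_re]
  cases d1 <;> cases d2 <;>
    simp_all [Complex.star_def, _root_.map_mul, map_neg, _root_.map_one, mul_comm,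
      mul_assoc, mul_left_comm] <;> ring

/-- The oracle is Hermitian. -/
lemma oracle1_conjTranspose (n : ℕ) (x : Fin n → Bool) :
    (oracle1 n x)ᴴ = oracle1 n x := by
  unfold oracle1
  rw [Matrix.diagonal_conjTranspose]
  refine congrArg Matrix.diagonal ?_
  funext i
  simp only [Pi.star_apply]
  by_cases h : extendBit x i <;> simp [h]

lemma oracle1_dot (n : ℕ) (x : Fin n → Bool)
    (A : Matrix (Fin (n + 1)) (Fin (n + 1)) ℂ) (ψ : Fin (n + 1) → ℂ) :
    star ψ ⬝ᵥ ((oracle1 n x * A * oracle1 n x) *ᵥ ψ)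
      = star (oracle1 n x *ᵥ ψ) ⬝ᵥ (A *ᵥ (oracle1 n x *ᵥ ψ)) := by
  rw [Matrix.star_mulVec, oracle1_conjTranspose, ← Matrix.dotProduct_mulVec,
    Matrix.mulVec_mulVec, Matrix.mulVec_mulVec, Matrix.mul_assoc]

lemma oracle1_norm (n : ℕ) (x : Fin n → Bool) (ψ : Fin (n + 1) → ℂ) (i : Fin (n + 1)) :
    ‖(oracle1 n x *ᵥ ψ) i‖ = ‖ψ i‖ := by
  unfold oracle1
  rw [Matrix.mulVec_diagonal]
  by_cases h : extendBit x i <;> simp [h]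

/-- If a quantum algorithm `(ψ, (M_x)_{x∈C})` using one oracle query
learns a concept class `C` of size `m ≥ 2` with failure probability at most `ε < 1/2`,
then there is a set `S ⊆ [n]` with `|S| ≤ 4·log₂(m)/(1 − 2√(ε(1−ε)))` on which every
pair of distinct concepts differs. -/
theorem one_query_quantum_learning_separating_set
    (n m : ℕ)
    (C : Finset (Fin n → Bool)) (hm : C.card = m) (hm2 : 2 ≤ m)
    (ε : ℝ) (hε0 : 0 ≤ ε) (hε1 : ε < 1 / 2)
    (ψ : Fin (n + 1) → ℂ) (hψ : ∑ i, ‖ψ i‖ ^ 2 = 1)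
    (M : (Fin n → Bool) → Matrix (Fin (n + 1)) (Fin (n + 1)) ℂ)
    (hM : ∀ x ∈ C, (M x).PosSemidef)
    (hMI : (1 - ∑ x ∈ C, M x).PosSemidef)
    (hsucc : ∀ x ∈ C,
      ((1 - ε : ℝ) : ℂ) ≤ star ψ ⬝ᵥ ((oracle1 n x * M x * oracle1 n x) *ᵥ ψ)) :
    ∃ S : Finset (Fin n),
      (S.card : ℝ) ≤ 4 * Real.logb 2 m / (1 - 2 * Real.sqrt (ε * (1 - ε))) ∧
      ∀ x ∈ C, ∀ y ∈ C, x ≠ y → ∃ j ∈ S, x j ≠ y j := by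
  classical
  set s : ℝ := Real.sqrt (ε * (1 - ε)) with hs
  have hs0 : 0 ≤ s := Real.sqrt_nonneg _
  have hshalf : s < 1 / 2 := by
    have h1 : ε * (1 - ε) < 1 / 4 := by nlinarith
    have h2 : Real.sqrt (ε * (1 - ε)) < Real.sqrt (1 / 4) :=
      Real.sqrt_lt_sqrt (by nlinarith) h1
    have h3 : Real.sqrt (1 / 4) = 1 / 2 := by
      rw [show (1 / 4 : ℝ) = (1 / 2) ^ 2 by norm_num, Real.sqrt_sq (by norm_num)]
    rw [hs]; rw [h3] at h2; exact h2
  set c : ℝ := (1 - 2 * s) / 2 with hcdef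
  have hc0 : 0 < c := by rw [hcdef]; linarith
  have hc1 : c < 1 := by rw [hcdef]; linarith
  have hchalf : c ≤ 1 / 2 := by rw [hcdef]; linarith
  set w : Fin n → ℝ := fun j => ‖ψ j.succ‖ ^ 2 with hwdef
  have hw0 : ∀ j, 0 ≤ w j := fun j => by positivity
  have hw1 : ∑ j, w j ≤ 1 := by
    rw [Fin.sum_univ_succ] at hψ
    have : (0 : ℝ) ≤ ‖ψ 0‖ ^ 2 := by positivity
    rw [hwdef]; linarith
  -- partial sums of the measurement operators are PSD
  have hpsd_sum : ∀ D : Finset (Fin n → Bool), D ⊆ C → (∑ z ∈ D, M z).PosSemidef := by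
    intro D hD
    exact Finset.sum_induction M _ (fun a b ha hb => ha.add hb)
      Matrix.PosSemidef.zero (fun z hz => hM z (hD hz))
  -- the key pairwise weight bound
  have hc : ∀ x ∈ C, ∀ y ∈ C, x ≠ y →
      c ≤ ∑ j ∈ Finset.univ.filter (fun j => x j ≠ y j), w j := by
    intro x hx y hy hxy
    set u : Fin (n + 1) → ℂ := oracle1 n x *ᵥ ψ with hu
    set v : Fin (n + 1) → ℂ := oracle1 n y *ᵥ ψ with hv
    have hunorm : ∑ i, ‖u i‖ ^ 2 = 1 := by
      rw [hu, ← hψ]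
      exact Finset.sum_congr rfl fun i _ => by rw [oracle1_norm]
    have hvnorm : ∑ i, ‖v i‖ ^ 2 = 1 := by
      rw [hv, ← hψ]
      exact Finset.sum_congr rfl fun i _ => by rw [oracle1_norm]
    have hyerase : y ∈ C.erase x := Finset.mem_erase.mpr ⟨hxy.symm, hy⟩
    have hsplit : ∑ z ∈ C, M z
        = M x + (M y + ∑ z ∈ (C.erase x).erase y, M z) := by
      rw [Finset.add_sum_erase _ M hyerase, Finset.add_sum_erase _ M hx]
    have hAB : ((1 : Matrix (Fin (n + 1)) (Fin (n + 1)) ℂ) - (M x + M y)).PosSemidef := by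
      have hrest : (∑ z ∈ (C.erase x).erase y, M z).PosSemidef :=
        hpsd_sum _ (((C.erase x).erase_subset y).trans (C.erase_subset x))
      have heq : (1 - ∑ z ∈ C, M z) + ∑ z ∈ (C.erase x).erase y, M z
          = 1 - (M x + M y) := by rw [hsplit]; abel
      rw [← heq]; exact hMI.add hrest
    have hAu : (1 - ε : ℝ) ≤ (star u ⬝ᵥ (M x *ᵥ u)).re := by
      have h := hsucc x hx
      rw [Complex.le_def] at h
      have h' := h.1
      rwa [Complex.ofReal_re, oracle1_dot] at h'
    have hBv : (1 - ε : ℝ) ≤ (star v ⬝ᵥ (M y *ᵥ v)).re := by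
      have h := hsucc y hy
      rw [Complex.le_def] at h
      have h' := h.1
      rwa [Complex.ofReal_re, oracle1_dot] at h'
    have hover := overlap_bound ε hε0 hε1.le u v hunorm hvnorm (M x) (M y)
      (hM x hx) (hM y hy) hAB hAu hBv
    -- compute the overlap in terms of the weights
    have hre : (star u ⬝ᵥ v).re
        = 1 - 2 * ∑ i, (if extendBit x i ≠ extendBit y i then ‖ψ i‖ ^ 2 else 0) := by
      rw [dotProduct, Complex.re_sum]
      have hterm : ∀ i : Fin (n + 1), ((star u) i * v i).re
          = ‖ψ i‖ ^ 2 - 2 * (if extendBit x i ≠ extendBit y i then ‖ψ i‖ ^ 2 else 0) := by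
        intro i
        have hui : u i = (if extendBit x i then (-1 : ℂ) else 1) * ψ i :=
          Matrix.mulVec_diagonal _ _ _
        have hvi : v i = (if extendBit y i then (-1 : ℂ) else 1) * ψ i :=
          Matrix.mulVec_diagonal _ _ _
        rw [Pi.star_apply, hui, hvi]
        exact term_re _ _ _
      rw [Finset.sum_congr rfl fun i _ => hterm i, Finset.sum_sub_distrib,
        ← Finset.mul_sum, hψ]
    have hW : ∑ i, (if extendBit x i ≠ extendBit y i then ‖ψ i‖ ^ 2 else 0)
        = ∑ j ∈ Finset.univ.filter (fun j => x j ≠ y j), w j := by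
      rw [Fin.sum_univ_succ]
      have h0 : (if extendBit x 0 ≠ extendBit y 0 then ‖ψ 0‖ ^ 2 else 0) = 0 := by
        simp [extendBit]
      have hsuc : ∀ j : Fin n,
          (if extendBit x j.succ ≠ extendBit y j.succ then ‖ψ j.succ‖ ^ 2 else 0)
            = (if x j ≠ y j then w j else 0) := by
        intro j; by_cases h : x j = y j <;> simp [extendBit, hwdef, h]
      rw [h0, zero_add, Finset.sum_congr rfl fun j _ => hsuc j, Finset.sum_filter]
    rw [hre, hW] at hover
    linarith
  -- apply the combinatorial covering lemma
  obtain ⟨T, -, hTempty, hTbound⟩ :=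
    build_lemma w hw0 hw1 C c hc0 hc1 hc (pairsCS C ∅).card ∅ rfl
  refine ⟨T, ?_, ?_⟩
  · -- cardinality bound
    set N₀ := (pairsCS C ∅).card with hN₀
    have hN₀pos : 0 < N₀ := by
      obtain ⟨x, hx, y, hy, hxy⟩ := Finset.one_lt_card.mp (by omega : 1 < C.card)
      refine Finset.card_pos.mpr ⟨(x, y), ?_⟩
      simp only [pairsCS, Finset.mem_filter, Finset.mem_product]
      exact ⟨⟨hx, hy⟩, hxy, fun j hj => absurd hj (Finset.notMem_empty j)⟩
    have hN₀le : (N₀ : ℝ) ≤ (m : ℝ) ^ 2 := by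
      have h1 : N₀ ≤ C.card * C.card := by
        calc N₀ ≤ (C ×ˢ C).card := Finset.card_le_card (Finset.filter_subset _ _)
          _ = C.card * C.card := Finset.card_product C C
      rw [← hm]; exact_mod_cast h1.trans_eq (sq C.card).symm
    rw [if_neg (Nat.pos_iff_ne_zero.mp hN₀pos)] at hTbound
    have hlogN₀ : Real.log N₀ ≤ 2 * Real.log m := by
      have := Real.log_le_log (by exact_mod_cast hN₀pos) hN₀le
      rwa [Real.log_pow, Nat.cast_ofNat] at this
    have hTb2 : (T.card : ℝ) ≤ 1 + 2 * Real.log m / c := by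
      have hq : Real.log N₀ / c ≤ 2 * Real.log m / c := by gcongr
      simp only [Finset.card_empty, Nat.cast_zero, zero_add] at hTbound
      linarith
    -- numerical comparison with the stated bound
    have hl2 : (0:ℝ) < Real.log 2 := Real.log_pos (by norm_num)
    have hl2' : Real.log 2 < 0.6931471808 := Real.log_two_lt_d9
    have hlm : Real.log 2 ≤ Real.log m :=
      Real.log_le_log (by norm_num) (by exact_mod_cast hm2)
    have hδ : 1 - 2 * Real.sqrt (ε * (1 - ε)) = 2 * c := by rw [hcdef]; ring
    rw [hδ, Real.logb]
    have hfinal : 1 + 2 * Real.log m / c ≤ 4 * (Real.log m / Real.log 2) / (2 * c) := by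
      rw [show 4 * (Real.log m / Real.log 2) / (2 * c)
          = 2 * Real.log m / (Real.log 2 * c) by field_simp; ring]
      rw [← sub_nonneg]
      have hexp : 2 * Real.log m / (Real.log 2 * c) - (1 + 2 * Real.log m / c)
          = (2 * Real.log m - (c + 2 * Real.log m) * Real.log 2) / (Real.log 2 * c) := by
        field_simp
      rw [hexp]
      apply div_nonneg _ (by positivity)
      nlinarith [mul_nonneg (sub_nonneg.2 hlm) (by linarith : (0:ℝ) ≤ 1 - Real.log 2)]
    linarith
  · -- separation
    intro x hx y hy hxy
    by_contra h
    push_neg at h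
    have : (x, y) ∈ pairsCS C T := by
      simp only [pairsCS, Finset.mem_filter, Finset.mem_product]
      exact ⟨⟨hx, hy⟩, hxy, h⟩
    rw [hTempty] at this
    exact absurd this (Finset.notMem_empty _)
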